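/- Let x, z : Fin K → ℝ both be antitone, and suppose x majorizes z, i.e., Σ_{n < m} z_n ≤ Σ_{n < m} x_n for every m ≤ K with Σ_{n < K} z_n = Σ_{n < K} x_n. Then there exists a list of at most K − 1 real K×K matrices T_1, …, T_r (r ≤ K − 1), each of the form T = t • 1 + (1 − t) • P where t ∈ [0,1] and P is the permutation matrix of a transposition of two indices, such that (T_r ⬝ ⋯ ⬝ T_1).mulVec x = z. -/

import Mathlib

open Finset Matrix

private lemma perm_mulVec {K : ℕ} (σ : Equiv.Perm (Fin K)) (x : Fin K → ℝ) :
    (σ.permMatrix ℝ).mulVec x = fun k => x (σ k) := by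
  funext k
  simp [Matrix.mulVec, dotProduct, Equiv.Perm.permMatrix,
    PEquiv.toMatrix, Equiv.toPEquiv_apply]

private lemma sum_filter_succ {K : ℕ} (m : ℕ) (hm : m < K) (f : Fin K → ℝ) :
    ∑ n ∈ univ.filter (fun n : Fin K => (n : ℕ) < m + 1), f n =
    ∑ n ∈ univ.filter (fun n : Fin K => (n : ℕ) < m), f n + f ⟨m, hm⟩ := by
  have h : univ.filter (fun n : Fin K => (n : ℕ) < m + 1)
      = insert ⟨m, hm⟩ (univ.filter (fun n : Fin K => (n : ℕ) < m)) := by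
    ext n
    simp [Nat.lt_succ_iff_lt_or_eq, Fin.ext_iff, or_comm]
    constructor <;> intro h <;> omega
  rw [h, Finset.sum_insert (by simp), add_comm]

private lemma filter_univ_lt_self {K : ℕ} :
    univ.filter (fun n : Fin K => (n : ℕ) < K) = univ := by
  ext n; simp [n.isLt]

private lemma hlp_aux (K : ℕ) (z : Fin K → ℝ) (hz : Antitone z) :
    ∀ (d : ℕ) (x : Fin K → ℝ),
      (∀ m ≤ K, ∑ n ∈ univ.filter (fun n : Fin K => (n : ℕ) < m), z n ≤
        ∑ n ∈ univ.filter (fun n : Fin K => (n : ℕ) < m), x n) →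
      (∑ n : Fin K, z n = ∑ n : Fin K, x n) →
      (univ.filter (fun n => x n ≠ z n)).card ≤ d →
      ∃ Ts : List (Matrix (Fin K) (Fin K) ℝ),
        Ts.length ≤ d - 1 ∧
        (∀ T ∈ Ts, ∃ (t : ℝ) (i j : Fin K), 0 ≤ t ∧ t ≤ 1 ∧ i ≠ j ∧
          T = t • (1 : Matrix (Fin K) (Fin K) ℝ) + (1 - t) • (Equiv.swap i j).permMatrix ℝ) ∧
        Ts.prod.mulVec x = z := by
  intro d
  induction d with
  | zero =>
      intro x hmaj hsum hcard
      have hx : x = z := by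
        funext n
        by_contra h
        have hmem : n ∈ univ.filter (fun n => x n ≠ z n) := by simp [h]
        have := Finset.card_pos.mpr ⟨n, hmem⟩
        omega
      exact ⟨[], by simp, by simp, by simp [hx]⟩
  | succ d ih =>
      intro x hmaj hsum hcard
      by_cases hxz : x = z
      · exact ⟨[], by simp, by simp, by simp [hxz]⟩
      set s := univ.filter (fun n => x n ≠ z n) with hs
      have hs_ne : s.Nonempty := by
        rcases Function.ne_iff.mp hxz with ⟨n, hn⟩
        exact ⟨n, by simp [hs, hn]⟩
      set i := s.min' hs_ne with hidef
      have hi_mem : i ∈ s := s.min'_mem hs_ne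
      have hi_ne : x i ≠ z i := by
        have := hi_mem; rw [hs] at this; simpa using this
      have h_eq_lt : ∀ n : Fin K, n < i → x n = z n := by
        intro n hn
        by_contra h
        exact absurd (s.min'_le n (by simp [hs, h])) (not_le.mpr hn)
      -- x i > z i
      have hzi : z i < x i := by
        have h1 := hmaj ((i : ℕ) + 1) i.isLt
        rw [sum_filter_succ _ i.isLt z, sum_filter_succ _ i.isLt x] at h1
        have h2 : ∑ n ∈ univ.filter (fun n : Fin K => (n : ℕ) < (i : ℕ)), z n =
            ∑ n ∈ univ.filter (fun n : Fin K => (n : ℕ) < (i : ℕ)), x n := by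
          refine Finset.sum_congr rfl (fun n hn => ?_)
          have hn' : (n : ℕ) < (i : ℕ) := by simpa using hn
          exact (h_eq_lt n (Fin.lt_def.mpr hn')).symm
      
        rw [h2] at h1
        simp only [Fin.eta] at h1
        have h3 : z i ≤ x i := by linarith
        exact lt_of_le_of_ne h3 (Ne.symm hi_ne)
      -- exists coordinate where x < z
      have hex : ∃ k, x k < z k := by
        by_contra h
        push_neg at h
        have : ∑ n : Fin K, z n < ∑ n : Fin K, x n :=
          Finset.sum_lt_sum (fun n _ => h n) ⟨i, Finset.mem_univ i, hzi⟩
        exact absurd hsum (ne_of_lt this)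
      set s2 := univ.filter (fun n : Fin K => i < n ∧ x n < z n) with hs2
      have hs2_ne : s2.Nonempty := by
        obtain ⟨k, hk⟩ := hex
        have hki : i < k := by
          rcases lt_trichotomy k i with h | h | h
          · exact absurd (h_eq_lt k h) (ne_of_lt hk)
          · exact absurd hk (by rw [h]; linarith)
          · exact h
        exact ⟨k, by simp [hs2, hki, hk]⟩
      set l := s2.min' hs2_ne with hldef
      have hl_mem : l ∈ s2 := s2.min'_mem hs2_ne
      have hl : i < l ∧ x l < z l := by
        have := hl_mem; rw [hs2] at this; simpa using this
      have hil : i < l := hl.1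
      have hxl : x l < z l := hl.2
      have h_ge : ∀ n : Fin K, i < n → n < l → z n ≤ x n := by
        intro n h1 h2
        by_contra h
        exact absurd (s2.min'_le n (by simp [hs2, h1, not_le.mp h]))
          (not_le.mpr h2)
      have hzil : z l ≤ z i := hz (le_of_lt hil)
      set δ := min (x i - z i) (z l - x l) with hδ
      have hδ1 : δ ≤ x i - z i := min_le_left _ _
      have hδ2 : δ ≤ z l - x l := min_le_right _ _
      have hδpos : 0 < δ := lt_min (by linarith) (by linarith)
      have hxil : x l < x i := by linarith
      have hδle : δ ≤ x i - x l := by linarith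
      have hne0 : x i - x l ≠ 0 := by linarith
      set t := 1 - δ / (x i - x l) with ht
      have ht0 : 0 ≤ t := by
        have h := (div_le_one (show (0:ℝ) < x i - x l by linarith)).mpr hδle
        rw [ht]; linarith
      have ht1 : t ≤ 1 := by
        have h : 0 ≤ δ / (x i - x l) := div_nonneg (le_of_lt hδpos) (by linarith)
        rw [ht]; linarith
      have h1t : 1 - t = δ / (x i - x l) := by rw [ht]; ring
      have hkey : (1 - t) * (x i - x l) = δ := by
        rw [h1t, div_mul_cancel₀ _ hne0]
      have hinel : i ≠ l := ne_of_lt hil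
      set T := t • (1 : Matrix (Fin K) (Fin K) ℝ) +
        (1 - t) • (Equiv.swap i l).permMatrix ℝ with hT
      set y : Fin K → ℝ :=
        fun n => if n = i then x i - δ else if n = l then x l + δ else x n with hy
      have hyi : y i = x i - δ := by simp [hy]
      have hyl : y l = x l + δ := by simp [hy, Ne.symm hinel]
      have hyo : ∀ n, n ≠ i → n ≠ l → y n = x n := by
        intro n h1 h2; simp [hy, h1, h2]
      have hTx : T.mulVec x = y := by
        funext k
        rw [hT, Matrix.add_mulVec, Matrix.smul_mulVec, Matrix.smul_mulVec,
          Matrix.one_mulVec, perm_mulVec]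
        simp only [Pi.add_apply, Pi.smul_apply, smul_eq_mul]
        by_cases h1 : k = i
        · subst h1
          rw [Equiv.swap_apply_left, hyi]
          linear_combination -hkey
        · by_cases h2 : k = l
          · subst h2
            rw [Equiv.swap_apply_right, hyl]
            linear_combination hkey
          · rw [Equiv.swap_apply_of_ne_of_ne h1 h2, hyo k h1 h2]
            ring
      -- partial sums of y
      have hysum : ∀ m : ℕ,
          ∑ n ∈ univ.filter (fun n : Fin K => (n : ℕ) < m), y n =
          ∑ n ∈ univ.filter (fun n : Fin K => (n : ℕ) < m), x n
            + (if (i : ℕ) < m then -δ else 0) + (if (l : ℕ) < m then δ else 0) := by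
        intro m
        have hyn : ∀ n, y n = x n + ((if n = i then -δ else 0) + (if n = l then δ else 0)) := by
          intro n
          by_cases h1 : n = i
          · subst h1
            rw [hyi, if_pos rfl, if_neg hinel]
            ring
          · by_cases h2 : n = l
            · subst h2
              rw [hyl, if_neg h1, if_pos rfl]
              ring
            · rw [hyo n h1 h2, if_neg h1, if_neg h2]
              ring
        rw [Finset.sum_congr rfl (fun n _ => hyn n), Finset.sum_add_distrib,
          Finset.sum_add_distrib, Finset.sum_ite_eq', Finset.sum_ite_eq']
        simp only [Finset.mem_filter, Finset.mem_univ, true_and]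
        ring
      -- majorization for y
      have hmajy : ∀ m ≤ K, ∑ n ∈ univ.filter (fun n : Fin K => (n : ℕ) < m), z n ≤
          ∑ n ∈ univ.filter (fun n : Fin K => (n : ℕ) < m), y n := by
        intro m hm
        rw [hysum m]
        by_cases h1 : (i : ℕ) < m
        · by_cases h2 : (l : ℕ) < m
          · rw [if_pos h1, if_pos h2]
            have := hmaj m hm
            linarith
          · rw [if_pos h1, if_neg h2]
            have key : δ ≤ ∑ n ∈ univ.filter (fun n : Fin K => (n : ℕ) < m), x n
                - ∑ n ∈ univ.filter (fun n : Fin K => (n : ℕ) < m), z n := by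
              rw [← Finset.sum_sub_distrib]
              have h3 : ∀ n ∈ univ.filter (fun n : Fin K => (n : ℕ) < m),
                  0 ≤ x n - z n := by
                intro n hn
                have hn' : (n : ℕ) < m := by simpa using hn
                rcases lt_trichotomy n i with h | h | h
                · rw [h_eq_lt n h]; linarith
                · rw [h]; linarith
                · have hnl : n < l := Fin.lt_def.mpr (lt_of_lt_of_le hn' (not_lt.mp h2))
                  linarith [h_ge n h hnl]
              have h5 : x i - z i ≤
                  ∑ n ∈ univ.filter (fun n : Fin K => (n : ℕ) < m), (x n - z n) :=
                Finset.single_le_sum h3 (by simp [h1])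
              linarith
            linarith
        · have h2 : ¬ (l : ℕ) < m := by
            have := Fin.lt_def.mp hil
            omega
          rw [if_neg h1, if_neg h2]
          have := hmaj m hm
          linarith
      -- total sum of y
      have hsumy : ∑ n : Fin K, z n = ∑ n : Fin K, y n := by
        have h1 := hysum K
        rw [filter_univ_lt_self, if_pos i.isLt, if_pos l.isLt] at h1
        rw [h1, hsum]
        ring
      -- the fixed coordinate
      have hxl_ne : x l ≠ z l := ne_of_lt hxl
      obtain ⟨w, hw_mem, hyw⟩ : ∃ w, w ∈ s ∧ y w = z w := by
        rcases le_total (x i - z i) (z l - x l) with hc | hc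
        · refine ⟨i, hi_mem, ?_⟩
          rw [hyi, hδ, min_eq_left hc]; ring
        · refine ⟨l, by simp [hs, hxl_ne], ?_⟩
          rw [hyl, hδ, min_eq_right hc]; ring
      have hcard_y : (univ.filter (fun n => y n ≠ z n)).card ≤ d := by
        have hsub : univ.filter (fun n => y n ≠ z n) ⊆ s.erase w := by
          intro n hn
          have hn' : y n ≠ z n := by simpa using hn
          rw [Finset.mem_erase]
          constructor
          · rintro rfl; exact hn' hyw
          · rw [hs]
            simp only [Finset.mem_filter, Finset.mem_univ, true_and]
            by_cases h1 : n = i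
            · rw [h1]; exact hi_ne
            · by_cases h2 : n = l
              · rw [h2]; exact hxl_ne
              · rw [← hyo n h1 h2]; exact hn'
        calc (univ.filter (fun n => y n ≠ z n)).card
            ≤ (s.erase w).card := Finset.card_le_card hsub
          _ = s.card - 1 := Finset.card_erase_of_mem hw_mem
          _ ≤ d := by omega
      have hd1 : 1 ≤ d := by
        have hsub2 : ({i, l} : Finset (Fin K)) ⊆ s := by
          intro n hn
          rw [hs]
          simp only [Finset.mem_insert, Finset.mem_singleton] at hn
          rcases hn with rfl | rfl
          · exact hi_mem
          · simp [hxl_ne]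
        have h2 : 2 ≤ s.card := by
          have := Finset.card_le_card hsub2
          rwa [Finset.card_insert_of_notMem (by simp [hinel]),
            Finset.card_singleton] at this
        omega
      obtain ⟨Ts, hlen, hprop, hmul⟩ := ih y hmajy hsumy hcard_y
      refine ⟨Ts ++ [T], ?_, ?_, ?_⟩
      · rw [List.length_append, List.length_singleton]
        omega
      · intro T' hT'
        rcases List.mem_append.mp hT' with h | h
        · exact hprop T' h
        · rw [List.mem_singleton] at h
          exact ⟨t, i, l, ht0, ht1, hinel, by rw [h, hT]⟩
      · rw [List.prod_append, List.prod_singleton, ← Matrix.mulVec_mulVec, hTx, hmul]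

/-- **Preliminary 3 (Hardy–Littlewood–Pólya T-transform theorem).** If `x` majorizes `z`
(both antitone), then `z` is obtained from `x` by applying at most `K − 1` T-transforms,
i.e. matrices of the form `t • 1 + (1 − t) • P` with `t ∈ [0,1]` and `P` the permutation
matrix of a transposition. -/
theorem majorization_T_transform (K : ℕ) (x z : Fin K → ℝ)
    (hx : Antitone x) (hz : Antitone z)
    (hmaj : ∀ m ≤ K, ∑ n ∈ Finset.univ.filter (fun n : Fin K => (n : ℕ) < m), z n ≤
        ∑ n ∈ Finset.univ.filter (fun n : Fin K => (n : ℕ) < m), x n)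
    (hsum : ∑ n : Fin K, z n = ∑ n : Fin K, x n) :
    ∃ Ts : List (Matrix (Fin K) (Fin K) ℝ),
      Ts.length ≤ K - 1 ∧
      (∀ T ∈ Ts, ∃ (t : ℝ) (i j : Fin K), 0 ≤ t ∧ t ≤ 1 ∧ i ≠ j ∧
        T = t • (1 : Matrix (Fin K) (Fin K) ℝ) + (1 - t) • (Equiv.swap i j).permMatrix ℝ) ∧
      Ts.prod.mulVec x = z := by
  refine hlp_aux K z hz K x hmaj hsum ?_
  calc (univ.filter (fun n => x n ≠ z n)).card ≤ univ.card := Finset.card_filter_le _ _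
    _ = K := by simp
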